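/- arXiv:2006.14537 — 6 statements merged into one kernel-verified Lean document; each statement's English description precedes it below -/
import Mathlib

section
/- Let a, b, c, d, θ, TD, TR, D, τᵢ be real numbers with a ≥ 0, b ≥ 0, 0 ≤ d ≤ c, τᵢ > 0 and 0 ≤ TD ≤ TR. Then for every pair of distinct states X, Y among the nine 2TR-periodic SHORT MAIN states {S, SB, SD, AP, AS, ASD, I, ID, IB}, with the two exceptions {X,Y} = {I, SB} and {X,Y} = {I, SD}, the existence-condition sets of X and of Y cannot be satisfied simultaneously. -/
/-- Existence conditions of the nine 2TR-periodic SHORT MAIN states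
`S, SB, SD, AP, AS, ASD, I, ID, IB` (indexed `0,...,8` in this order). -/
noncomputable def shortMainCond (a b c d θ TD TR D τ : ℝ) : Fin 9 → Prop :=
  fun i =>
    let Nm : ℝ := Real.exp (-(TR - TD - D) / τ)
    let Np : ℝ := Real.exp (-(TR - D) / τ)
    let Mm : ℝ := Real.exp (-(2 * TR - TD - D) / τ)
    let Mp : ℝ := Real.exp (-(2 * TR - D) / τ)
    match i with
    | ⟨0, _⟩ => d < θ ∧ a - b * Mp + d < θ ∧ c - b * Np < θ                 -- S
    | ⟨1, _⟩ => c - b * Np < θ ∧ d - b * Mm ≥ θ ∧ a - b * Mp < θ            -- SB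
    | ⟨2, _⟩ => c - b * Mm ≥ θ ∧ a - b * Mm + d ≥ θ ∧ c - b * Np < θ ∧
                d - b * Mm < θ ∧ a - b * Mp < θ                              -- SD
    | ⟨3, _⟩ => a - b * Mp + d < θ ∧ c - b * Nm ≥ θ                          -- AP
    | ⟨4, _⟩ => c - b * Nm ≥ θ ∧ a - b * Np + d < θ ∧ d - b * Mm ≥ θ ∧
                a - b * Np < θ                                               -- AS
    | ⟨5, _⟩ => a - b * Mm + d ≥ θ ∧ c - b * Nm ≥ θ ∧ a - b * Np + d < θ ∧
                d - b * Mm < θ ∧ a - b * Np < θ                              -- ASD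
    | ⟨6, _⟩ => d ≥ θ ∧ a - b * Np + c < θ                                   -- I
    | ⟨7, _⟩ => c - b * Nm ≥ θ ∧ a - b * Nm + d ≥ θ ∧ d - b * Nm < θ ∧
                a - b * Np < θ                                               -- ID
    | ⟨8, _⟩ => d - b * Nm ≥ θ ∧ a - b * Np < θ                              -- IB

set_option maxHeartbeats 2000000 in
/-- Multistability theorem: except for the pairs {I, SB} (indices {6,1}) and
{I, SD} (indices {6,2}), no two distinct 2TR-periodic SHORT MAIN states can
have their existence conditions satisfied simultaneously. -/
theorem shortMain_no_coexistence
    (a b c d θ TD TR D τ : ℝ)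
    (ha : 0 ≤ a) (hb : 0 ≤ b) (hd0 : 0 ≤ d) (hdc : d ≤ c)
    (hτ : 0 < τ) (hTD0 : 0 ≤ TD) (hTDTR : TD ≤ TR) :
    ∀ i j : Fin 9, i ≠ j →
      ({i, j} : Finset (Fin 9)) ≠ ({6, 1} : Finset (Fin 9)) →
      ({i, j} : Finset (Fin 9)) ≠ ({6, 2} : Finset (Fin 9)) →
      ¬(shortMainCond a b c d θ TD TR D τ i ∧ shortMainCond a b c d θ TD TR D τ j) := by
  intro i j hij h61 h62
  have e1 : Real.exp (-(2 * TR - D) / τ) ≤ Real.exp (-(2 * TR - TD - D) / τ) := by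
    apply Real.exp_le_exp.mpr; gcongr; linarith
  have e2 : Real.exp (-(2 * TR - TD - D) / τ) ≤ Real.exp (-(TR - D) / τ) := by
    apply Real.exp_le_exp.mpr; gcongr; linarith
  have e3 : Real.exp (-(TR - D) / τ) ≤ Real.exp (-(TR - TD - D) / τ) := by
    apply Real.exp_le_exp.mpr; gcongr; linarith
  have p0 : (0:ℝ) < Real.exp (-(2 * TR - D) / τ) := Real.exp_pos _
  have b0 : 0 ≤ b * Real.exp (-(2 * TR - D) / τ) := by positivity
  have b1 : b * Real.exp (-(2 * TR - D) / τ) ≤ b * Real.exp (-(2 * TR - TD - D) / τ) :=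
    mul_le_mul_of_nonneg_left e1 hb
  have b2 : b * Real.exp (-(2 * TR - TD - D) / τ) ≤ b * Real.exp (-(TR - D) / τ) :=
    mul_le_mul_of_nonneg_left e2 hb
  have b3 : b * Real.exp (-(TR - D) / τ) ≤ b * Real.exp (-(TR - TD - D) / τ) :=
    mul_le_mul_of_nonneg_left e3 hb
  fin_cases i <;> fin_cases j <;>
    first
      | exact absurd rfl hij
      | exact absurd rfl h61
      | exact absurd rfl h62
      | exact absurd (Finset.pair_comm _ _) h61
      | exact absurd (Finset.pair_comm _ _) h62
      | (rintro ⟨h1, h2⟩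
         simp only [shortMainCond] at h1 h2
         casesm* _ ∧ _
         linarith)
end

section
/- There exist real numbers a, b, c, d, θ, TD, TR, D, τᵢ with a ≥ 0, b ≥ 0, 0 ≤ d ≤ c, θ > 0, τᵢ > 0, 0 < TD < D and TD + D < TR such that the existence conditions of the state I (namely C₁ ≥ θ and C₆⁺ < θ) and the existence conditions of the state SB (namely C₃⁺ < θ, C₈⁻ ≥ θ and C₉ < θ) hold simultaneously; that is, the integrated state I can coexist with the segregated state SB. -/
/-- The integrated state `I` (conditions `C₁ ≥ θ` and `C₆⁺ < θ`) can coexist with the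
segregated state `SB` (conditions `C₃⁺ < θ`, `C₈⁻ ≥ θ` and `C₉ < θ`), where
`N⁺ = exp(−(TR−D)/τᵢ)`, `M⁻ = exp(−(2TR−TD−D)/τᵢ)`, `M⁺ = exp(−(2TR−D)/τᵢ)`,
`C₁ = d`, `C₃⁺ = c − b·N⁺`, `C₆⁺ = a − b·N⁺ + c`, `C₈⁻ = d − b·M⁻`, `C₉ = a − b·M⁺`. -/
theorem coexistence_I_SB :
    ∃ a b c d θ TD TR D τ : ℝ,
      0 ≤ a ∧ 0 ≤ b ∧ 0 ≤ d ∧ d ≤ c ∧ 0 < θ ∧ 0 < τ ∧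
      0 < TD ∧ TD < D ∧ TD + D < TR ∧
      -- existence conditions of the state I
      (d ≥ θ ∧ a - b * Real.exp (-(TR - D) / τ) + c < θ) ∧
      -- existence conditions of the state SB
      (c - b * Real.exp (-(TR - D) / τ) < θ ∧
       d - b * Real.exp (-(2 * TR - TD - D) / τ) ≥ θ ∧
       a - b * Real.exp (-(2 * TR - D) / τ) < θ) := by
  refine ⟨0, Real.exp 5, 2, 2, 1, 1, 4, 2, 1, by positivity, (Real.exp_pos _).le, by norm_num,
    le_refl _, one_pos, one_pos, one_pos, by norm_num, by norm_num, ⟨by norm_num, ?_⟩, ?_, ?_, ?_⟩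
  · have h : Real.exp 5 * Real.exp (-(4 - 2 : ℝ) / 1) = Real.exp 3 := by
      rw [← Real.exp_add]; norm_num
    linarith [Real.add_one_le_exp (3:ℝ)]
  · have h : Real.exp 5 * Real.exp (-(4 - 2 : ℝ) / 1) = Real.exp 3 := by
      rw [← Real.exp_add]; norm_num
    linarith [Real.add_one_le_exp (3:ℝ)]
  · have h : Real.exp 5 * Real.exp (-(2 * 4 - 1 - 2 : ℝ) / 1) = 1 := by
      rw [← Real.exp_add]; norm_num
    linarith
  · nlinarith [mul_pos (Real.exp_pos 5) (Real.exp_pos (-(2 * 4 - 2 : ℝ) / 1))]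
end

section
/- There exist real numbers a, b, c, d, θ, TD, TR, D, τᵢ with a ≥ 0, b ≥ 0, 0 ≤ d ≤ c, θ > 0, τᵢ > 0, 0 < TD < D and TD + D < TR such that the existence conditions of the state I (namely C₁ ≥ θ and C₆⁺ < θ) and the existence conditions of the state SD (namely C₄⁻ ≥ θ, C₂⁻ ≥ θ, C₃⁺ < θ, C₈⁻ < θ and C₉ < θ) hold simultaneously; that is, the integrated state I can coexist with the segregated state SD. -/
/-- The integrated state `I` (conditions `C₁ ≥ θ` and `C₆⁺ < θ`) can coexist with the
segregated state `SD` (conditions `C₄⁻ ≥ θ`, `C₂⁻ ≥ θ`, `C₃⁺ < θ`, `C₈⁻ < θ`, `C₉ < θ`),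
where `N⁺ = exp(−(TR−D)/τᵢ)`, `M⁻ = exp(−(2TR−TD−D)/τᵢ)`, `M⁺ = exp(−(2TR−D)/τᵢ)`,
`C₁ = d`, `C₂⁻ = a − b·M⁻ + d`, `C₃⁺ = c − b·N⁺`, `C₄⁻ = c − b·M⁻`,
`C₆⁺ = a − b·N⁺ + c`, `C₈⁻ = d − b·M⁻`, `C₉ = a − b·M⁺`. -/
theorem coexistence_I_SD :
    ∃ a b c d θ TD TR D τ : ℝ,
      0 ≤ a ∧ 0 ≤ b ∧ 0 ≤ d ∧ d ≤ c ∧ 0 < θ ∧ 0 < τ ∧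
      0 < TD ∧ TD < D ∧ TD + D < TR ∧
      -- existence conditions of the state I
      (d ≥ θ ∧ a - b * Real.exp (-(TR - D) / τ) + c < θ) ∧
      -- existence conditions of the state SD
      (c - b * Real.exp (-(2 * TR - TD - D) / τ) ≥ θ ∧
       a - b * Real.exp (-(2 * TR - TD - D) / τ) + d ≥ θ ∧
       c - b * Real.exp (-(TR - D) / τ) < θ ∧
       d - b * Real.exp (-(2 * TR - TD - D) / τ) < θ ∧
       a - b * Real.exp (-(2 * TR - D) / τ) < θ) := by
  refine ⟨1, Real.exp 5, 2, 1, 1, 1, 4, 2, 1, by norm_num, (Real.exp_pos 5).le,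
    by norm_num, by norm_num, by norm_num, by norm_num, by norm_num, by norm_num,
    by norm_num, ?_⟩
  have h2 : Real.exp 5 * Real.exp (-(4 - 2) / 1) = Real.exp 3 := by
    rw [← Real.exp_add]; norm_num
  have h5 : Real.exp 5 * Real.exp (-(2 * 4 - 1 - 2) / 1) = 1 := by
    rw [← Real.exp_add]; norm_num
  have h6 : Real.exp 5 * Real.exp (-(2 * 4 - 2) / 1) = Real.exp (-1) := by
    rw [← Real.exp_add]; norm_num
  have e3 : (2 : ℝ) < Real.exp 3 := by
    have := Real.add_one_lt_exp (by norm_num : (3:ℝ) ≠ 0); linarith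
  have em1 : (0 : ℝ) < Real.exp (-1) := Real.exp_pos _
  refine ⟨⟨le_refl 1, by rw [h2]; linarith⟩, by rw [h5]; norm_num,
    by rw [h5]; norm_num, by rw [h2]; linarith, by rw [h5]; norm_num,
    by rw [h6]; linarith⟩
end

section
/- Let b, c, d, θ, N⁻, M⁻ be real numbers with b ≥ 0, 0 ≤ d ≤ c and 0 ≤ M⁻ ≤ N⁻, and let y_A¹, y_A², y_B¹, y_B² ∈ {0,1}. Define s_B^{1−} = N⁻·y_B² + M⁻·(1−y_B²)·y_B¹, s_B^{2−} = N⁻·y_B¹ + M⁻·(1−y_B¹)·y_B², s_A^{1−} = N⁻·y_A² + M⁻·(1−y_A²)·y_A¹, s_A^{2−} = N⁻·y_A¹ + M⁻·(1−y_A¹)·y_A², and x_A¹ = H_θ(c − b·s_B^{1−}), x_A² = H_θ(d − b·s_B^{2−}), x_B¹ = H_θ(d − b·s_A^{1−}), x_B² = H_θ(c − b·s_A^{2−}). Assume x_A^i ≤ y_A^i and x_B^i ≤ y_B^i for i = 1, 2. Then: (1) y_A¹ = y_B² = 1 implies x_A¹ = x_B², and y_A² = y_B¹ = 1 implies x_A²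 = x_B¹; (2) y_B¹ = y_B² implies x_A¹ ≥ x_A², and y_A¹ = y_A² implies x_B² ≥ x_B¹; (3) y_A² = 1 implies x_B¹ ≤ r for each r among the eight values x_A¹, y_A¹, x_A², y_A², x_B¹, y_B¹, x_B², y_B², and y_B¹ = 1 implies x_A² ≤ r for each such r; (4) if y_A² = y_B² and y_A¹ = y_B¹ then x_A¹ ≥ x_B¹ and x_B² ≥ x_A². -/
/-- Heaviside gain function with threshold θ: `H_θ(x) = 1` if `x ≥ θ`, else `0`. -/
noncomputable def Hs (θ x : ℝ) : ℝ := if θ ≤ x then 1 else 0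


private lemma Hs_mono {θ x y : ℝ} (h : x ≤ y) : Hs θ x ≤ Hs θ y := by
  unfold Hs; split_ifs with h1 h2 <;> norm_num
  exact h2 (le_trans h1 h)

private lemma s_le {Nm Mm y1 y2 : ℝ} (hM0 : 0 ≤ Mm) (hMN : Mm ≤ Nm)
    (h1 : y1 = 0 ∨ y1 = 1) (h2 : y2 = 0 ∨ y2 = 1) :
    Nm * y2 + Mm * (1 - y2) * y1 ≤ Nm := by
  rcases h1 with h1 | h1 <;> rcases h2 with h2 | h2 <;> subst h1 <;> subst h2 <;> linarith

/-- Structural conditions (1)–(4) satisfied by the matrix-form entries of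
2TR-periodic SHORT MAIN states. -/
theorem shortMain_matrix_structure
    (b c d θ Nm Mm yA1 yA2 yB1 yB2 : ℝ)
    (hb : 0 ≤ b) (hd0 : 0 ≤ d) (hdc : d ≤ c) (hM0 : 0 ≤ Mm) (hMN : Mm ≤ Nm)
    (hyA1 : yA1 = 0 ∨ yA1 = 1) (hyA2 : yA2 = 0 ∨ yA2 = 1)
    (hyB1 : yB1 = 0 ∨ yB1 = 1) (hyB2 : yB2 = 0 ∨ yB2 = 1)
    (sB1 sB2 sA1 sA2 xA1 xA2 xB1 xB2 : ℝ)
    (hsB1 : sB1 = Nm * yB2 + Mm * (1 - yB2) * yB1)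
    (hsB2 : sB2 = Nm * yB1 + Mm * (1 - yB1) * yB2)
    (hsA1 : sA1 = Nm * yA2 + Mm * (1 - yA2) * yA1)
    (hsA2 : sA2 = Nm * yA1 + Mm * (1 - yA1) * yA2)
    (hxA1 : xA1 = Hs θ (c - b * sB1))
    (hxA2 : xA2 = Hs θ (d - b * sB2))
    (hxB1 : xB1 = Hs θ (d - b * sA1))
    (hxB2 : xB2 = Hs θ (c - b * sA2))
    (h1 : xA1 ≤ yA1) (h2 : xA2 ≤ yA2) (h3 : xB1 ≤ yB1) (h4 : xB2 ≤ yB2) :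
    -- (1)
    ((yA1 = 1 ∧ yB2 = 1 → xA1 = xB2) ∧ (yA2 = 1 ∧ yB1 = 1 → xA2 = xB1)) ∧
    -- (2)
    ((yB1 = yB2 → xA2 ≤ xA1) ∧ (yA1 = yA2 → xB1 ≤ xB2)) ∧
    -- (3)
    ((yA2 = 1 → xB1 ≤ xA1 ∧ xB1 ≤ yA1 ∧ xB1 ≤ xA2 ∧ xB1 ≤ yA2 ∧
                 xB1 ≤ xB1 ∧ xB1 ≤ yB1 ∧ xB1 ≤ xB2 ∧ xB1 ≤ yB2) ∧
     (yB1 = 1 → xA2 ≤ xA1 ∧ xA2 ≤ yA1 ∧ xA2 ≤ xA2 ∧ xA2 ≤ yA2 ∧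
                 xA2 ≤ xB1 ∧ xA2 ≤ yB1 ∧ xA2 ≤ xB2 ∧ xA2 ≤ yB2)) ∧
    -- (4)
    ((yA2 = yB2 ∧ yA1 = yB1) → (xB1 ≤ xA1 ∧ xA2 ≤ xB2)) := by
  have hsB1N : sB1 ≤ Nm := hsB1 ▸ s_le hM0 hMN hyB1 hyB2
  have hsB2N : sB2 ≤ Nm := hsB2 ▸ s_le hM0 hMN hyB2 hyB1
  have hsA1N : sA1 ≤ Nm := hsA1 ▸ s_le hM0 hMN hyA1 hyA2
  have hsA2N : sA2 ≤ Nm := hsA2 ▸ s_le hM0 hMN hyA2 hyA1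
  refine ⟨⟨?_, ?_⟩, ⟨?_, ?_⟩, ⟨?_, ?_⟩, ?_⟩
  · rintro ⟨e1, e2⟩
    rw [hxA1, hxB2, hsB1, hsA2, e1, e2]; ring_nf
  · rintro ⟨e1, e2⟩
    rw [hxA2, hxB1, hsB2, hsA1, e1, e2]; ring_nf
  · intro e
    rw [hxA1, hxA2, hsB1, hsB2, e]
    exact Hs_mono (by linarith)
  · intro e
    rw [hxB1, hxB2, hsA1, hsA2, e]
    exact Hs_mono (by linarith)
  · intro e
    have hA1N : sA1 = Nm := by rw [hsA1, e]; ring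
    have base : ∀ s : ℝ, s ≤ Nm → xB1 ≤ Hs θ (c - b * s) := by
      intro s hs
      rw [hxB1, hA1N]
      exact Hs_mono (by nlinarith)
    have baseD : ∀ s : ℝ, s ≤ Nm → xB1 ≤ Hs θ (d - b * s) := by
      intro s hs
      rw [hxB1, hA1N]
      exact Hs_mono (by nlinarith)
    have b1 : xB1 ≤ xA1 := hxA1 ▸ base sB1 hsB1N
    have b2 : xB1 ≤ xA2 := hxA2 ▸ baseD sB2 hsB2N
    have b3 : xB1 ≤ xB2 := hxB2 ▸ base sA2 hsA2N
    exact ⟨b1, le_trans b1 h1, b2, le_trans b2 h2, le_refl _, h3, b3, le_trans b3 h4⟩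
  · intro e
    have hB2N : sB2 = Nm := by rw [hsB2, e]; ring
    have base : ∀ s : ℝ, s ≤ Nm → xA2 ≤ Hs θ (c - b * s) := by
      intro s hs
      rw [hxA2, hB2N]
      exact Hs_mono (by nlinarith)
    have baseD : ∀ s : ℝ, s ≤ Nm → xA2 ≤ Hs θ (d - b * s) := by
      intro s hs
      rw [hxA2, hB2N]
      exact Hs_mono (by nlinarith)
    have b1 : xA2 ≤ xA1 := hxA1 ▸ base sB1 hsB1N
    have b2 : xA2 ≤ xB1 := hxB1 ▸ baseD sA1 hsA1N
    have b3 : xA2 ≤ xB2 := hxB2 ▸ base sA2 hsA2N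
    exact ⟨b1, le_trans b1 h1, le_refl _, h2, b2, le_trans b2 h3, b3, le_trans b3 h4⟩
  · rintro ⟨e1, e2⟩
    have eq1 : sA1 = sB1 := by rw [hsA1, hsB1, e1, e2]
    have eq2 : sA2 = sB2 := by rw [hsA2, hsB2, e1, e2]
    constructor
    · rw [hxB1, hxA1, eq1]; exact Hs_mono (by linarith)
    · rw [hxA2, hxB2, eq2]; exact Hs_mono (by linarith)
end

section
/- Let a, b, c, d, θ and s̃_A, s̃_B be real numbers with a ≥ 0, and define F : ℝ² → ℝ² by F(u_A, u_B) = (−u_A + H_θ(a·u_B − b·s̃_B + c), −u_B + H_θ(a·u_A − b·s̃_A + d)). Then: (i) if F(1,0) = (0,0), then F(0,0) ≠ (0,0), F(0,1) ≠ (0,0) and F(1,1) ≠ (0,0); (ii) if F(0,1) = (0,0), then F(0,0) ≠ (0,0), F(1,0) ≠ (0,0) and F(1,1) ≠ (0,0); (iii) if both F(0,0) = (0,0) and F(1,1) = (0,0), then a > 0. -/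
/-- Vector field of the fast subsystem during an active tone interval, with
frozen delayed synaptic values `s̃_A`, `s̃_B`. -/
noncomputable def fastF (a b c d θ sA sB : ℝ) (u : ℝ × ℝ) : ℝ × ℝ :=
  (-u.1 + Hs θ (a * u.2 - b * sB + c), -u.2 + Hs θ (a * u.1 - b * sA + d))

/-- The equilibria `(1,0)` and `(0,1)` of the fast subsystem cannot coexist with
any other equilibrium, and coexistence of `(0,0)` and `(1,1)` requires `a > 0`. -/
theorem fast_equilibria_coexistence (a b c d θ sA sB : ℝ) (ha : 0 ≤ a) :
    (fastF a b c d θ sA sB (1, 0) = (0, 0) →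
      fastF a b c d θ sA sB (0, 0) ≠ (0, 0) ∧
      fastF a b c d θ sA sB (0, 1) ≠ (0, 0) ∧
      fastF a b c d θ sA sB (1, 1) ≠ (0, 0)) ∧
    (fastF a b c d θ sA sB (0, 1) = (0, 0) →
      fastF a b c d θ sA sB (0, 0) ≠ (0, 0) ∧
      fastF a b c d θ sA sB (1, 0) ≠ (0, 0) ∧
      fastF a b c d θ sA sB (1, 1) ≠ (0, 0)) ∧
    (fastF a b c d θ sA sB (0, 0) = (0, 0) ∧ fastF a b c d θ sA sB (1, 1) = (0, 0) →
      0 < a) := by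
  refine ⟨fun h => ⟨?_, ?_, ?_⟩, fun h => ⟨?_, ?_, ?_⟩, fun ⟨h1, h2⟩ => ?_⟩ <;>
    simp only [fastF, Hs, Prod.mk.injEq, Prod.ext_iff, ne_eq] at * <;>
    split_ifs at * <;> simp_all <;> linarith
end

section
/- Let s₁, s₂ be real numbers with 0 < s₁ < 1 and 0 < s₂ ≤ 1, and let u_A⁰, u_B⁰ be real numbers with 0 ≤ u_A⁰ < s₁ and u_B⁰ > (u_A⁰ − 1)·s₂/(s₁ − 1). Then for every t ≥ 0 such that 1 − (1 − u_A⁰)·exp(−t) ≤ s₁, one has u_B⁰·exp(−t) > s₂·((1 − (1 − u_A⁰)·exp(−t)) − 1)/(s₁ − 1), and in particular u_B⁰·exp(−t) > s₂. -/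
/-- Trajectories of the fast subsystem starting above the separatrix of the
degenerate saddle `(s₁, s₂)` with `u_A⁰ < s₁` remain above the separatrix while
`u_A ≤ s₁`, and in particular stay above `s₂`. -/
theorem separatrix_trajectories
    (s1 s2 uA0 uB0 : ℝ)
    (hs1 : 0 < s1) (hs1' : s1 < 1) (hs2 : 0 < s2) (hs2' : s2 ≤ 1)
    (huA0 : 0 ≤ uA0) (huA0' : uA0 < s1)
    (huB0 : uB0 > (uA0 - 1) * s2 / (s1 - 1)) :
    ∀ t : ℝ, 0 ≤ t → 1 - (1 - uA0) * Real.exp (-t) ≤ s1 →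
      uB0 * Real.exp (-t) >
        s2 * ((1 - (1 - uA0) * Real.exp (-t)) - 1) / (s1 - 1) ∧
      uB0 * Real.exp (-t) > s2 := by
  intro t ht hle
  have he : 0 < Real.exp (-t) := Real.exp_pos _
  have hs : s1 - 1 < 0 := by linarith
  rw [gt_iff_lt, div_lt_iff_of_neg hs] at huB0
  constructor
  · rw [gt_iff_lt, div_lt_iff_of_neg hs]
    nlinarith
  · nlinarith [mul_pos hs2 he]
end
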